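/- arXiv:1901.04887 — 4 statements merged into one kernel-verified Lean document; each statement's English description precedes it below -/
import Mathlib

section
/- Let X be a topological space and κ an infinite cardinal. Suppose 𝒞 is a cover of X such that |𝒞| ≤ 2^κ and every C ∈ 𝒞 is dense in X and has subspace tightness t(C) ≤ κ. If t(X) ≤ 2^κ or πχ(X) ≤ 2^κ, then wt(X) ≤ κ. -/
open Cardinal Set Topology
universe u
noncomputable section

/-- The tightness of a space: the least infinite cardinal `τ` such that whenever
`y ∈ closure A` there is `B ⊆ A` with `#B ≤ τ` and `y ∈ closure B`. -/
def tightness (Y : Type u) [TopologicalSpace Y] : Cardinal.{u} :=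
  sInf {τ : Cardinal.{u} | ℵ₀ ≤ τ ∧ ∀ (A : Set Y) (y : Y), y ∈ closure A →
    ∃ B ⊆ A, #B ≤ τ ∧ y ∈ closure B}

/-- The `μ`-closure of a set `A`: the union of the closures of all subsets of `A`
of cardinality at most `μ`. -/
def kClosure {X : Type u} [TopologicalSpace X] (μ : Cardinal.{u}) (A : Set X) : Set X :=
  ⋃ B ∈ {B : Set X | B ⊆ A ∧ #B ≤ μ}, closure B

/-- `𝒞` witnesses that the weak tightness of `X` is at most `κ`. -/
def IsWeakTightnessWitness (X : Type u) [TopologicalSpace X] (κ : Cardinal.{u})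
    (𝒞 : Set (Set X)) : Prop :=
  ⋃₀ 𝒞 = Set.univ ∧ #𝒞 ≤ 2 ^ κ ∧ ∀ C ∈ 𝒞, tightness C ≤ κ ∧ kClosure (2 ^ κ) C = Set.univ

/-- The weak tightness of `X`: the least infinite cardinal `κ` for which there is a
cover `𝒞` of `X` with `#𝒞 ≤ 2^κ` such that each `C ∈ 𝒞` has tightness at most `κ`
and `X = cl_{2^κ} C`. -/
def weakTightness (X : Type u) [TopologicalSpace X] : Cardinal.{u} :=
  sInf {κ : Cardinal.{u} | ℵ₀ ≤ κ ∧ ∃ 𝒞 : Set (Set X), IsWeakTightnessWitness X κ 𝒞}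

/-- The π-character of a point `x`: the least cardinality of a family of nonempty
open sets such that every neighborhood of `x` contains a member of the family. -/
def piCharacterAt {X : Type u} [TopologicalSpace X] (x : X) : Cardinal.{u} :=
  sInf {c : Cardinal.{u} | ∃ 𝒰 : Set (Set X), #𝒰 = c ∧
    (∀ U ∈ 𝒰, IsOpen U ∧ U.Nonempty) ∧ ∀ N ∈ nhds x, ∃ U ∈ 𝒰, U ⊆ N}

/-- The π-character of a space: the supremum of the π-characters at its points
(at least `ℵ₀`). -/
def piCharacter (X : Type u) [TopologicalSpace X] : Cardinal.{u} :=
  max ℵ₀ (⨆ x : X, piCharacterAt x)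

/-- The Lindelöf degree: the least infinite cardinal `κ` such that every open cover
has a subcover of cardinality at most `κ`. -/
def lindelofDegree (X : Type u) [TopologicalSpace X] : Cardinal.{u} :=
  sInf {κ : Cardinal.{u} | ℵ₀ ≤ κ ∧ ∀ 𝒰 : Set (Set X), (∀ U ∈ 𝒰, IsOpen U) →
    ⋃₀ 𝒰 = Set.univ → ∃ 𝒱 ⊆ 𝒰, #𝒱 ≤ κ ∧ ⋃₀ 𝒱 = Set.univ}

/-- The density of `X`: the least infinite cardinality of a dense subset. -/
def density (X : Type u) [TopologicalSpace X] : Cardinal.{u} :=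
  sInf {c : Cardinal.{u} | ℵ₀ ≤ c ∧ ∃ D : Set X, Dense D ∧ #D ≤ c}

/-- The pseudocharacter of a subset `F` of `X`: the least infinite cardinality
of a family of open sets whose intersection is `F`. -/
def setPseudoCharacter {X : Type u} [TopologicalSpace X] (F : Set X) : Cardinal.{u} :=
  sInf {κ : Cardinal.{u} | ℵ₀ ≤ κ ∧ ∃ 𝒰 : Set (Set X), #𝒰 ≤ κ ∧
    (∀ U ∈ 𝒰, IsOpen U) ∧ ⋂₀ 𝒰 = F}

/-- The pseudocharacter of a space: the least infinite `κ` such that every singleton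
is the intersection of at most `κ` open sets. -/
def pseudoCharacter (X : Type u) [TopologicalSpace X] : Cardinal.{u} :=
  sInf {κ : Cardinal.{u} | ℵ₀ ≤ κ ∧ ∀ x : X, ∃ 𝒰 : Set (Set X), #𝒰 ≤ κ ∧
    (∀ U ∈ 𝒰, IsOpen U) ∧ ⋂₀ 𝒰 = {x}}

/-- The character of a (closed) set `G` in `X`: the least infinite cardinality of a
family `𝒰` of open sets containing `G` such that every open set containing `G`
contains a member of `𝒰`. -/
def setCharacter {X : Type u} [TopologicalSpace X] (G : Set X) : Cardinal.{u} :=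
  sInf {κ : Cardinal.{u} | ℵ₀ ≤ κ ∧ ∃ 𝒰 : Set (Set X), #𝒰 ≤ κ ∧
    (∀ U ∈ 𝒰, IsOpen U ∧ G ⊆ U) ∧ ∀ V : Set X, IsOpen V → G ⊆ V → ∃ U ∈ 𝒰, U ⊆ V}

/-- A cardinal `λ` is a caliber of `X` if every `λ`-indexed family of nonempty open
sets has a subfamily of cardinality `λ` with nonempty intersection. -/
def IsCaliber (X : Type u) [TopologicalSpace X] (lam : Cardinal.{u}) : Prop :=
  ∀ (ι : Type u) (U : ι → Set X), #ι = lam → (∀ i, IsOpen (U i) ∧ (U i).Nonempty) →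
    ∃ J : Set ι, #J = lam ∧ (⋂ i ∈ J, U i).Nonempty

/-- A space is quasiregular if every nonempty open set contains the closure of a
nonempty open set. -/
def Quasiregular (X : Type u) [TopologicalSpace X] : Prop :=
  ∀ U : Set X, IsOpen U → U.Nonempty → ∃ V : Set X, IsOpen V ∧ V.Nonempty ∧ closure V ⊆ U

/-- The θ-closure of a set `A`. -/
def thetaClosure {X : Type u} [TopologicalSpace X] (A : Set X) : Set X :=
  {x : X | ∀ U : Set X, IsOpen U → x ∈ U → (closure U ∩ A).Nonempty}

/-- The θ-density of `X`: the least infinite cardinality of a θ-dense subset. -/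
def thetaDensity (X : Type u) [TopologicalSpace X] : Cardinal.{u} :=
  sInf {c : Cardinal.{u} | ℵ₀ ≤ c ∧ ∃ D : Set X, thetaClosure D = Set.univ ∧ #D ≤ c}

/-- The linear Lindelöf degree: the least infinite cardinal `κ` such that every open
cover totally ordered by inclusion has a subcover of cardinality at most `κ`. -/
def linearLindelofDegree (X : Type u) [TopologicalSpace X] : Cardinal.{u} :=
  sInf {κ : Cardinal.{u} | ℵ₀ ≤ κ ∧ ∀ 𝒰 : Set (Set X), (∀ U ∈ 𝒰, IsOpen U) →
    IsChain (· ⊆ ·) 𝒰 → ⋃₀ 𝒰 = Set.univ → ∃ 𝒱 ⊆ 𝒰, #𝒱 ≤ κ ∧ ⋃₀ 𝒱 = Set.univ}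

/-- The almost Lindelöf degree with respect to closed sets. -/
def almostLindelofDegreeClosed (X : Type u) [TopologicalSpace X] : Cardinal.{u} :=
  sInf {κ : Cardinal.{u} | ℵ₀ ≤ κ ∧ ∀ (F : Set X) (𝒱 : Set (Set X)), IsClosed F →
    (∀ V ∈ 𝒱, IsOpen V) → F ⊆ ⋃₀ 𝒱 →
    ∃ 𝒱' ⊆ 𝒱, #𝒱' ≤ κ ∧ F ⊆ ⋃ V ∈ 𝒱', closure V}

/-- The closed pseudocharacter of a space. -/
def closedPseudoCharacter (X : Type u) [TopologicalSpace X] : Cardinal.{u} :=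
  sInf {κ : Cardinal.{u} | ℵ₀ ≤ κ ∧ ∀ x : X, ∃ 𝒰 : Set (Set X), #𝒰 ≤ κ ∧
    (∀ U ∈ 𝒰, IsOpen U ∧ x ∈ U) ∧ ⋂ U ∈ 𝒰, closure U = {x}}

/-- If `𝒞` is a cover of `X` with `#𝒞 ≤ 2^κ`, each member dense in `X`
with subspace tightness at most `κ`, and `t(X) ≤ 2^κ` or `πχ(X) ≤ 2^κ`,
then `wt(X) ≤ κ`. -/
theorem weakTightness_le_of_dense_cover (X : Type u) [TopologicalSpace X]
    (κ : Cardinal.{u}) (hκ : ℵ₀ ≤ κ)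
    (𝒞 : Set (Set X)) (hcov : ⋃₀ 𝒞 = Set.univ) (hcard : #𝒞 ≤ 2 ^ κ)
    (hC : ∀ C ∈ 𝒞, Dense C ∧ tightness C ≤ κ)
    (h : tightness X ≤ 2 ^ κ ∨ piCharacter X ≤ 2 ^ κ) :
    weakTightness X ≤ κ := by
  have key : ∀ C : Set X, Dense C → kClosure (2 ^ κ) C = Set.univ := by
    intro C hD
    ext x
    simp only [Set.mem_univ, iff_true, kClosure, Set.mem_iUnion, Set.mem_setOf_eq]
    rcases h with ht | hpi
    · -- tightness case
      have hne : {τ : Cardinal.{u} | ℵ₀ ≤ τ ∧ ∀ (A : Set X) (y : X), y ∈ closure A →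
          ∃ B ⊆ A, #B ≤ τ ∧ y ∈ closure B}.Nonempty := by
        refine ⟨max ℵ₀ (#X), le_max_left _ _, fun A y hy => ⟨A, subset_rfl,
          le_trans (Cardinal.mk_set_le A) (le_max_right _ _), hy⟩⟩
      have hmem := csInf_mem hne
      have hxC : x ∈ closure C := hD x
      obtain ⟨B, hBC, hBcard, hxB⟩ := hmem.2 C x hxC
      exact ⟨B, ⟨hBC, le_trans hBcard ht⟩, hxB⟩
    · -- π-character case
      have hxpi : piCharacterAt x ≤ 2 ^ κ := by
        refine le_trans (le_trans (le_ciSup (Cardinal.bddAbove_range _) x)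
          (le_max_right ℵ₀ _)) hpi
      have hne : {c : Cardinal.{u} | ∃ 𝒰 : Set (Set X), #𝒰 = c ∧
          (∀ U ∈ 𝒰, IsOpen U ∧ U.Nonempty) ∧ ∀ N ∈ nhds x, ∃ U ∈ 𝒰, U ⊆ N}.Nonempty := by
        refine ⟨#({U : Set X | IsOpen U ∧ U.Nonempty}),
          {U : Set X | IsOpen U ∧ U.Nonempty}, rfl, fun U hU => hU, fun N hN => ?_⟩
        obtain ⟨U, hUN, hUo, hxU⟩ := mem_nhds_iff.mp hN
        exact ⟨U, ⟨hUo, ⟨x, hxU⟩⟩, hUN⟩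
      obtain ⟨𝒰, h𝒰card, h𝒰open, h𝒰base⟩ := csInf_mem hne
      have h𝒰le : #𝒰 ≤ 2 ^ κ := by rw [h𝒰card]; exact hxpi
      have hpick : ∀ U : 𝒰, ((U : Set X) ∩ C).Nonempty := fun U =>
        hD.inter_open_nonempty U ((h𝒰open U U.2).1) ((h𝒰open U U.2).2)
      classical
      set f : 𝒰 → X := fun U => (hpick U).choose with hf
      refine ⟨Set.range f, ⟨?_, le_trans Cardinal.mk_range_le h𝒰le⟩, ?_⟩
      · rintro _ ⟨U, rfl⟩
        exact (hpick U).choose_spec.2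
      · rw [mem_closure_iff]
        intro O hO hxO
        obtain ⟨U, hU𝒰, hUO⟩ := h𝒰base O (hO.mem_nhds hxO)
        exact ⟨f ⟨U, hU𝒰⟩, hUO (hpick ⟨U, hU𝒰⟩).choose_spec.1, ⟨U, hU𝒰⟩, rfl⟩
  refine csInf_le' ⟨hκ, 𝒞, hcov, hcard, fun C hC' => ⟨(hC C hC').2, key C (hC C hC').1⟩⟩

end
end

section
/- Assume 2^ℵ₀ = 2^ℵ₁. Then the Cantor cube X = 2^{ω₁} (the product of ω₁ copies of the two-point discrete space) satisfies wt(X) = ℵ₀ while t(X) = ℵ₁; in particular X is a compact Hausdorff topological group with wt(X) < t(X). -/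
open Cardinal Set Topology
universe u
noncomputable section

namespace CantorAux
variable {I : Type u}

/-- Basic open neighborhood of `x` determined by the finite set `F`. -/
def basicNbhd (x : I → ZMod 2) (F : Finset I) : Set (I → ZMod 2) :=
  {z | ∀ i ∈ F, z i = x i}

lemma isOpen_basicNbhd (x : I → ZMod 2) (F : Finset I) : IsOpen (basicNbhd x F) := by
  have : basicNbhd x F = Set.pi ↑F (fun i => {x i}) := by
    ext z; simp [basicNbhd, Set.mem_pi]
  rw [this]
  exact isOpen_set_pi F.finite_toSet (fun i _ => isOpen_discrete _)

lemma mem_basicNbhd_self (x : I → ZMod 2) (F : Finset I) : x ∈ basicNbhd x F :=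
  fun _ _ => rfl

lemma basicNbhd_mem_nhds (x : I → ZMod 2) (F : Finset I) : basicNbhd x F ∈ nhds x :=
  (isOpen_basicNbhd x F).mem_nhds (mem_basicNbhd_self x F)

lemma exists_basicNbhd_subset {x : I → ZMod 2} {N : Set (I → ZMod 2)} (hN : N ∈ nhds x) :
    ∃ F : Finset I, basicNbhd x F ⊆ N := by
  rw [nhds_pi, Filter.mem_pi] at hN
  obtain ⟨s, hs, t, ht, hsub⟩ := hN
  refine ⟨hs.toFinset, fun z hz => hsub fun i hi => ?_⟩
  have : z i = x i := hz i (hs.mem_toFinset.mpr hi)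
  rw [this]
  exact mem_of_mem_nhds (ht i)

abbrev J : Type u := ULift.{u} ℕ

/-- Hewitt–Marczewski–Pondiczery for the Cantor cube: if `#I ≤ 2^ℵ₀` then
`I → ZMod 2` has a countable dense subset. -/
lemma exists_countable_dense (I : Type u) (hcard : #I ≤ 2 ^ ℵ₀) :
    ∃ D : Set (I → ZMod 2), D.Countable ∧ Dense D := by
  classical
  have hmk : #I ≤ #(Set (J : Type u)) := by
    rwa [mk_set, show #(J : Type u) = ℵ₀ by simp]
  obtain ⟨f⟩ := Cardinal.le_def _ _ |>.mp hmk
  let T := Σ s : Finset (J : Type u), ({t : Finset J // t ∈ s.powerset} → ZMod 2)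
  haveI : Countable T := by infer_instance
  let tf : Finset J → I → Finset J := fun s i =>
    ((s.finite_toSet.inter_of_left (f i)).toFinset)
  have tf_mem : ∀ s i, tf s i ∈ s.powerset := by
    intro s i
    rw [Finset.mem_powerset]
    intro n hn
    have := (Set.Finite.mem_toFinset _).mp hn
    exact this.1
  let h : T → (I → ZMod 2) := fun p i => p.2 ⟨tf p.1 i, tf_mem p.1 i⟩
  refine ⟨Set.range h, countable_range h, ?_⟩
  intro x
  rw [mem_closure_iff_nhds]
  intro N hN
  obtain ⟨F, hF⟩ := exists_basicNbhd_subset hN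
  have sep : ∀ i j : I, i ≠ j → ∃ n, ¬ (n ∈ f i ↔ n ∈ f j) := by
    intro i j hij
    by_contra hc
    push_neg at hc
    exact hij (f.injective (Set.ext fun n => by
      have := hc n; tauto))
  let pick : I → I → J := fun i j =>
    if h : ∃ n, ¬ (n ∈ f i ↔ n ∈ f j) then h.choose else default
  let s : Finset J := F.biUnion (fun i => F.image (pick i))
  have key : ∀ i ∈ F, ∀ j ∈ F, tf s i = tf s j → i = j := by
    intro i hi j hj hij
    by_contra hne
    obtain ⟨n, hn⟩ := sep i j hne
    have hpick : pick i j = (sep i j hne).choose := by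
      simp only [pick, dif_pos (sep i j hne)]
    have hns : (sep i j hne).choose ∈ s := by
      apply Finset.mem_biUnion.mpr ⟨i, hi, ?_⟩
      exact Finset.mem_image.mpr ⟨j, hj, hpick⟩
    have hspec := (sep i j hne).choose_spec
    set m := (sep i j hne).choose
    have : (m ∈ tf s i) ↔ (m ∈ tf s j) := by rw [hij]
    simp only [tf, Set.Finite.mem_toFinset, Set.mem_inter_iff, Finset.coe_biUnion] at this
    have hms : (m : J) ∈ (↑s : Set J) := hns
    tauto
  let g : ({t : Finset J // t ∈ s.powerset} → ZMod 2) := fun t =>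
    if h : ∃ i, i ∈ F ∧ tf s i = (t : Finset J) then x h.choose else 0
  refine ⟨h ⟨s, g⟩, hF ?_, Set.mem_range_self _⟩
  intro i hi
  show g ⟨tf s i, tf_mem s i⟩ = x i
  have hex : ∃ j, j ∈ F ∧ tf s j = tf s i := ⟨i, hi, rfl⟩
  simp only [g, dif_pos hex]
  obtain ⟨hjF, hje⟩ := hex.choose_spec
  rw [key _ hjF _ hi hje]

end CantorAux

open CantorAux in
lemma tightness_cantorCube (I : Type u) (hI : #I = aleph 1) :
    tightness (I → ZMod 2) = aleph 1 := by
  classical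
  haveI hInf : Infinite I := by
    rw [Cardinal.infinite_iff, hI]; exact aleph0_le_aleph 1
  set S := {τ : Cardinal.{u} | ℵ₀ ≤ τ ∧ ∀ (A : Set (I → ZMod 2)) (y : I → ZMod 2),
    y ∈ closure A → ∃ B ⊆ A, #B ≤ τ ∧ y ∈ closure B} with hS
  have hmem : aleph 1 ∈ S := by
    refine ⟨aleph0_lt_aleph_one.le, fun A y hy => ?_⟩
    let P : Finset I → Prop := fun F => (basicNbhd y F ∩ A).Nonempty
    let pickA : {F : Finset I // P F} → (I → ZMod 2) := fun F => F.2.choose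
    refine ⟨Set.range pickA, ?_, ?_, ?_⟩
    · rintro _ ⟨F, rfl⟩; exact F.2.choose_spec.2
    · calc #(Set.range pickA) ≤ #{F : Finset I // P F} := mk_range_le
        _ ≤ #(Finset I) := mk_subtype_le _
        _ = #I := mk_finset_of_infinite I
        _ = aleph 1 := hI
    · rw [mem_closure_iff_nhds]
      intro N hN
      obtain ⟨F, hF⟩ := exists_basicNbhd_subset hN
      have hP : P F := mem_closure_iff_nhds.mp hy _ (basicNbhd_mem_nhds y F)
      exact ⟨pickA ⟨F, hP⟩, mem_inter (hF hP.choose_spec.1) ⟨⟨F, hP⟩, rfl⟩⟩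
  have hlow : ∀ τ ∈ S, aleph 1 ≤ τ := by
    rintro τ ⟨hτ0, hτ⟩
    by_contra hlt
    push_neg at hlt
    have hτℵ₀ : τ ≤ ℵ₀ := by rwa [← succ_aleph0, Order.lt_succ_iff] at hlt
    set y₀ : I → ZMod 2 := fun _ => 1 with hy₀def
    set A₀ : Set (I → ZMod 2) :=
      {z | ∃ F : Finset I, z = fun i => if i ∈ F then 1 else 0} with hA₀def
    have hy₀ : y₀ ∈ closure A₀ := by
      rw [mem_closure_iff_nhds]
      intro N hN
      obtain ⟨F, hF⟩ := exists_basicNbhd_subset hN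
      exact ⟨fun i => if i ∈ F then 1 else 0,
        hF fun i hi => by simp [hi, hy₀def], ⟨F, rfl⟩⟩
    obtain ⟨B, hBA, hBcard, hyB⟩ := hτ A₀ y₀ hy₀
    haveI : Countable B := by
      rw [← Cardinal.mk_le_aleph0_iff]
      exact hBcard.trans hτℵ₀
    let Fb : B → Finset I := fun b => (hBA b.2).choose
    have hFb : ∀ b : B, (b : I → ZMod 2) = fun i => if i ∈ Fb b then 1 else 0 :=
      fun b => (hBA b.2).choose_spec
    set S₀ : Set I := ⋃ b : B, ↑(Fb b) with hS₀def
    have hS₀ : S₀.Countable := countable_iUnion fun b => (Fb b).countable_toSet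
    have hex : ∃ i₀, i₀ ∉ S₀ := by
      by_contra hc
      push_neg at hc
      have h1 : S₀ = Set.univ := eq_univ_of_forall hc
      have h2 : (Set.univ : Set I).Countable := h1 ▸ hS₀
      haveI := Set.countable_univ_iff.mp h2
      have := Cardinal.mk_le_aleph0 (α := I)
      rw [hI] at this
      exact aleph0_lt_aleph_one.not_ge this
    obtain ⟨i₀, hi₀⟩ := hex
    obtain ⟨b, hb1, hb2⟩ :=
      mem_closure_iff_nhds.mp hyB _ (basicNbhd_mem_nhds y₀ {i₀})
    have h1 : b i₀ = 1 := hb1 i₀ (Finset.mem_singleton_self i₀)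
    have h0 : b i₀ = 0 := by
      have hb := hFb ⟨b, hb2⟩
      have hnot : i₀ ∉ Fb ⟨b, hb2⟩ := by
        intro hmem'
        exact hi₀ (Set.mem_iUnion.mpr ⟨⟨b, hb2⟩, hmem'⟩)
      calc b i₀ = if i₀ ∈ Fb ⟨b, hb2⟩ then 1 else 0 := congrFun hb i₀
        _ = 0 := if_neg hnot
    exact one_ne_zero (h1 ▸ h0)
  exact le_antisymm (csInf_le (OrderBot.bddBelow _) hmem) (le_csInf ⟨_, hmem⟩ hlow)

open CantorAux in
lemma weakTightness_cantorCube
    (hch : (2 : Cardinal.{u}) ^ ℵ₀ = 2 ^ aleph 1)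
    (I : Type u) (hI : #I = aleph 1) :
    weakTightness (I → ZMod 2) = ℵ₀ := by
  classical
  obtain ⟨D, hDc, hDd⟩ := exists_countable_dense I
    (by rw [hI, two_power_aleph0]; exact aleph_one_le_continuum)
  have hXcard : #(I → ZMod 2) = 2 ^ aleph 1 := by
    rw [mk_arrow]
    simp [hI, Cardinal.mk_fintype]
  have hwmem : ℵ₀ ∈ {κ : Cardinal.{u} | ℵ₀ ≤ κ ∧
      ∃ 𝒞 : Set (Set (I → ZMod 2)), IsWeakTightnessWitness (I → ZMod 2) κ 𝒞} := by
    refine ⟨le_rfl, Set.range (fun x => insert x D), ?_, ?_, ?_⟩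
    · apply eq_univ_of_forall
      intro z
      exact ⟨insert z D, ⟨z, rfl⟩, mem_insert z D⟩
    · calc #(Set.range (fun x : I → ZMod 2 => insert x D)) ≤ #(I → ZMod 2) := mk_range_le
        _ = 2 ^ aleph 1 := hXcard
        _ = 2 ^ ℵ₀ := hch.symm
    · rintro C ⟨x, rfl⟩
      have hCc : (insert x D).Countable := hDc.insert x
      constructor
      · apply csInf_le (OrderBot.bddBelow _)
        refine ⟨le_rfl, fun A y hy => ⟨A, subset_rfl, ?_, hy⟩⟩
        haveI := hCc.to_subtype
        exact (mk_set_le A).trans Cardinal.mk_le_aleph0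
      · apply eq_univ_of_univ_subset
        have hdense : Dense (insert x D) := hDd.mono (subset_insert x D)
        intro z _
        haveI := hCc.to_subtype
        exact mem_biUnion
          ⟨subset_rfl, le_of_lt (lt_of_le_of_lt Cardinal.mk_le_aleph0 (cantor ℵ₀))⟩
          (hdense z)
  exact le_antisymm (csInf_le (OrderBot.bddBelow _) hwmem)
    (le_csInf ⟨_, hwmem⟩ (fun κ hκ => hκ.1))

/-- Under `2^ℵ₀ = 2^ℵ₁`, the Cantor cube `2^{ω₁}` has weak tightness `ℵ₀`
and tightness `ℵ₁`; in particular it is a compact Hausdorff topological group with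
`wt(X) < t(X)`. -/
theorem cantorCube_weaklyCountablyTight_of_continuum_eq
    (hch : (2 : Cardinal.{u}) ^ ℵ₀ = 2 ^ aleph 1)
    (I : Type u) (hI : #I = aleph 1) :
    weakTightness (I → ZMod 2) = ℵ₀ ∧ tightness (I → ZMod 2) = aleph 1 ∧
    CompactSpace (I → ZMod 2) ∧ T2Space (I → ZMod 2) ∧
    IsTopologicalAddGroup (I → ZMod 2) ∧
    weakTightness (I → ZMod 2) < tightness (I → ZMod 2) := by
  have ht := tightness_cantorCube I hI
  have hw := weakTightness_cantorCube hch I hI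
  refine ⟨hw, ht, inferInstance, inferInstance, inferInstance, ?_⟩
  rw [hw, ht]
  exact aleph0_lt_aleph_one

end
end

section
/- Let X be a topological space with wt(X) = κ, witnessed by a cover 𝒞 of X (so |𝒞| ≤ 2^κ, every C ∈ 𝒞 has subspace tightness ≤ κ, and X = cl_{2^κ}(C) for every C ∈ 𝒞). Let S be a function assigning to each x ∈ X a 𝒞-saturated set S(x) ⊆ X with x ∈ S(x) and |S(x)| ≤ 2^κ, and for A ⊆ X set S(A) = ⋃{S(x) : x ∈ A}. If X is κ⁺-compact (every subset of X of cardinality κ⁺ has a complete accumulation point), then there is no S-free sequence in X of length κ⁺, i.e., no family {x_α : α < κ⁺} ⊆ X such that closure(S({x_β : β < α})) ∩ closure({x_β : α ≤ β < κ⁺}) = ∅ for all α < κ⁺. -/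
open Cardinal Set Topology
universe u
noncomputable section

/-- If `wt(X) = κ` is witnessed by the cover `𝒞`, `S` assigns to each point a
`𝒞`-saturated set of cardinality at most `2^κ` containing it, and `X` is `κ⁺`-compact,
then `X` has no S-free sequence of length `κ⁺`. -/
theorem no_S_free_sequence_of_succ_compact (X : Type u) [TopologicalSpace X]
    (κ : Cardinal.{u}) (hκ : ℵ₀ ≤ κ) (hwt : weakTightness X = κ)
    (𝒞 : Set (Set X)) (hwit : IsWeakTightnessWitness X κ 𝒞)
    (S : X → Set X)
    (hS : ∀ x : X, x ∈ S x ∧ #(S x) ≤ 2 ^ κ ∧ ∀ C ∈ 𝒞, ∀ a ∈ S x, a ∈ closure (S x ∩ C))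
    (hcpt : ∀ A : Set X, #A = Order.succ κ →
      ∃ p : X, ∀ U : Set X, IsOpen U → p ∈ U → #(U ∩ A : Set X) = #A) :
    ¬ ∃ x : (Order.succ κ).ord.ToType → X,
      ∀ α : (Order.succ κ).ord.ToType,
        closure (⋃ β ∈ {β | β < α}, S (x β)) ∩ closure (x '' {β | α ≤ β}) = ∅ := by
  rintro ⟨x, hfree⟩
  -- The sequence is injective
  have hlt : ∀ β γ : (Order.succ κ).ord.ToType, β < γ → x β ≠ x γ := by
    intro β γ h heq
    have h1 : x β ∈ closure (⋃ b ∈ {b | b < γ}, S (x b)) :=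
      subset_closure (mem_biUnion h (hS (x β)).1)
    have h2 : x β ∈ closure (x '' {b | γ ≤ b}) := by
      rw [heq]; exact subset_closure ⟨γ, le_refl γ, rfl⟩
    exact absurd (hfree γ) (by rw [eq_empty_iff_forall_notMem]; push_neg; exact ⟨x β, h1, h2⟩)
  have hinj : Function.Injective x := by
    intro a b hab
    by_contra hne
    rcases lt_trichotomy a b with h | h | h
    · exact hlt a b h hab
    · exact hne h
    · exact hlt b a h hab.symm
  -- its range has cardinality κ⁺
  have hcard : #(range x) = Order.succ κ := by
    rw [Cardinal.mk_range_eq x hinj, Cardinal.mk_toType, Cardinal.card_ord]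
  -- take a complete accumulation point p
  obtain ⟨p, hp⟩ := hcpt (range x) hcard
  -- p lies in some member of the cover
  have hpC' : p ∈ ⋃₀ 𝒞 := hwit.1.symm ▸ mem_univ p
  obtain ⟨C, hC𝒞, hpC⟩ := hpC'
  -- D = S(range x)
  set D : Set X := ⋃ α, S (x α) with hD
  have hDsat : D ⊆ closure (D ∩ C) := by
    intro d hd
    obtain ⟨α, hα⟩ := mem_iUnion.mp hd
    have := (hS (x α)).2.2 C hC𝒞 d hα
    exact closure_mono (inter_subset_inter_left C (subset_iUnion (fun α => S (x α)) α)) this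
  have hAD : range x ⊆ D := by
    rintro a ⟨α, rfl⟩
    exact mem_iUnion.mpr ⟨α, (hS (x α)).1⟩
  have hsucc_pos : (0 : Cardinal.{u}) < Order.succ κ :=
    lt_of_lt_of_le (lt_of_lt_of_le Cardinal.aleph0_pos hκ) (Order.le_succ κ)
  have hpA : p ∈ closure (range x) := by
    rw [mem_closure_iff]
    intro U hU hpU
    have h1 := hp U hU hpU
    rw [hcard] at h1
    rw [← Set.nonempty_coe_sort, ← Cardinal.mk_ne_zero_iff, h1]
    exact hsucc_pos.ne'
  have hpD : p ∈ closure (D ∩ C) := by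
    have hsub : closure (range x) ⊆ closure (D ∩ C) :=
      calc closure (range x) ⊆ closure D := closure_mono hAD
        _ ⊆ closure (closure (D ∩ C)) := closure_mono hDsat
        _ = closure (D ∩ C) := closure_closure
    exact hsub hpA
  -- use the tightness of C
  have hne : {τ : Cardinal.{u} | ℵ₀ ≤ τ ∧ ∀ (A : Set C) (y : C), y ∈ closure A →
      ∃ B ⊆ A, #B ≤ τ ∧ y ∈ closure B}.Nonempty := by
    refine ⟨max ℵ₀ #C, le_max_left _ _, fun A y hy => ⟨A, subset_rfl, ?_, hy⟩⟩
    exact le_trans (Cardinal.mk_set_le A) (le_max_right _ _)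
  have hmem := csInf_mem hne
  have hτκ : tightness C ≤ κ := (hwit.2.2 C hC𝒞).1
  set A' : Set C := Subtype.val ⁻¹' D with hA'
  have himg : (Subtype.val : C → X) '' A' = C ∩ D := Subtype.image_preimage_coe C D
  have hyA' : (⟨p, hpC⟩ : C) ∈ closure A' := by
    rw [closure_subtype, himg, inter_comm]
    exact hpD
  obtain ⟨B, hBsub, hBcard, hyB⟩ := hmem.2 A' ⟨p, hpC⟩ hyA'
  set B' : Set X := Subtype.val '' B with hB'
  have hB'card : #B' ≤ κ := le_trans Cardinal.mk_image_le (le_trans hBcard hτκ)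
  have hpB' : p ∈ closure B' := by
    rw [closure_subtype] at hyB
    exact hyB
  have hB'D : ∀ b ∈ B', b ∈ D := by
    rintro b ⟨c, hc, rfl⟩
    exact hBsub hc
  -- the indices used by B' are bounded below some α₀
  have hchoice : ∀ b : B', ∃ α, (b : X) ∈ S (x α) := fun b => mem_iUnion.mp (hB'D b b.2)
  choose f hf using hchoice
  have hbd : Set.Bounded (· < ·) (range f) := by
    haveI : IsWellOrder (Order.succ κ).ord.ToType (· < ·) := isWellOrder_lt
    by_contra hnb
    have hcof : IsCofinal (range f) := fun a => by
      obtain ⟨b, hb, hba⟩ := (not_bounded_iff _).1 hnb a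
      exact ⟨b, hb, not_lt.mp hba⟩
    have hcl := Order.cof_le hcof
    rw [Ordinal.cof_toType, (Cardinal.isRegular_succ hκ).cof_eq] at hcl
    exact absurd (lt_of_le_of_lt (le_trans hcl (le_trans Cardinal.mk_range_le hB'card)) (Order.lt_succ κ)) (lt_irrefl _)
  obtain ⟨α₀, hα₀⟩ := hbd
  -- p is in the closure of the initial part
  have h1 : p ∈ closure (⋃ β ∈ {β | β < α₀}, S (x β)) := by
    refine closure_mono ?_ hpB'
    intro b hb
    exact mem_biUnion (hα₀ _ (mem_range_self ⟨b, hb⟩)) (hf ⟨b, hb⟩)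
  -- p is in the closure of the tail
  have h2 : p ∈ closure (x '' {β | α₀ ≤ β}) := by
    rw [mem_closure_iff]
    intro U hU hpU
    by_contra hempty
    rw [Set.not_nonempty_iff_eq_empty] at hempty
    have hsub : U ∩ range x ⊆ x '' (Set.Iio α₀) := by
      rintro u ⟨huU, β, rfl⟩
      rcases lt_or_ge β α₀ with h | h
      · exact ⟨β, h, rfl⟩
      · exfalso
        have hmemU : x β ∈ U ∩ x '' {β | α₀ ≤ β} := ⟨huU, ⟨β, h, rfl⟩⟩
        rw [hempty] at hmemU
        exact hmemU
    have hle : #(U ∩ range x : Set X) ≤ #(x '' Set.Iio α₀) := Cardinal.mk_le_mk_of_subset hsub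
    have hlt2 : #(x '' Set.Iio α₀) < Order.succ κ :=
      lt_of_le_of_lt Cardinal.mk_image_le (Cardinal.mk_Iio_ord_toType α₀)
    have := hp U hU hpU
    rw [hcard] at this
    exact absurd (this ▸ lt_of_le_of_lt hle hlt2) (lt_irrefl _)
  exact absurd (hfree α₀) (by rw [eq_empty_iff_forall_notMem]; push_neg; exact ⟨p, h1, h2⟩)

end
end

section
/- If X is a Hausdorff topological space, then |X| ≤ 2^{L(X)·wt(X)·ψ(X)}. -/
open Cardinal Set Topology
universe u
noncomputable section

section AuxBellaCarlson

variable {X : Type u} [TopologicalSpace X]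

lemma auxMemClosureInter {U B : Set X} {x : X} (hU : IsOpen U) (hxU : x ∈ U)
    (hx : x ∈ closure B) : x ∈ closure (U ∩ B) := by
  rw [mem_closure_iff] at hx ⊢
  intro V hV hxV
  obtain ⟨y, hy⟩ := hx (V ∩ U) (hV.inter hU) ⟨hxV, hxU⟩
  exact ⟨y, ⟨hy.1.1, hy.1.2, hy.2⟩⟩

lemma auxOpenDisjointClosure {V W : Set X} {z : X} (hV : IsOpen V) (hd : V ∩ W = ∅)
    (hzV : z ∈ V) (hz : z ∈ closure W) : False := by
  rw [mem_closure_iff] at hz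
  obtain ⟨y, hy⟩ := hz V hV hzV
  exact Set.eq_empty_iff_forall_notMem.mp hd y hy

-- subspace closure transfer
lemma auxClosureSubtype {C : Set X} {z : X} (hz : z ∈ C) (s : Set ↥C) :
    (⟨z, hz⟩ : ↥C) ∈ closure s ↔ z ∈ closure (Subtype.val '' s) := by
  exact closure_subtype.trans Iff.rfl

lemma tightness_spec (Y : Type u) [TopologicalSpace Y] :
    ℵ₀ ≤ tightness Y ∧ ∀ (A : Set Y) (y : Y), y ∈ closure A →
      ∃ B ⊆ A, #B ≤ tightness Y ∧ y ∈ closure B := by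
  have hne : {τ : Cardinal.{u} | ℵ₀ ≤ τ ∧ ∀ (A : Set Y) (y : Y), y ∈ closure A →
      ∃ B ⊆ A, #B ≤ τ ∧ y ∈ closure B}.Nonempty := by
    refine ⟨max ℵ₀ #Y, le_max_left _ _, fun A y hy => ⟨A, Set.Subset.rfl, ?_, hy⟩⟩
    exact le_trans (Cardinal.mk_set_le A) (le_max_right _ _)
  exact csInf_mem hne

lemma lindelofDegree_spec :
    ℵ₀ ≤ lindelofDegree X ∧ ∀ 𝒰 : Set (Set X), (∀ U ∈ 𝒰, IsOpen U) →
      ⋃₀ 𝒰 = Set.univ → ∃ 𝒱 ⊆ 𝒰, #𝒱 ≤ lindelofDegree X ∧ ⋃₀ 𝒱 = Set.univ := by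
  have hne : {κ : Cardinal.{u} | ℵ₀ ≤ κ ∧ ∀ 𝒰 : Set (Set X), (∀ U ∈ 𝒰, IsOpen U) →
      ⋃₀ 𝒰 = Set.univ → ∃ 𝒱 ⊆ 𝒰, #𝒱 ≤ κ ∧ ⋃₀ 𝒱 = Set.univ}.Nonempty := by
    refine ⟨max ℵ₀ (2 ^ #X), le_max_left _ _, fun 𝒰 _ hcov => ⟨𝒰, Set.Subset.rfl, ?_, hcov⟩⟩
    refine le_trans (le_trans (Cardinal.mk_set_le 𝒰) (le_of_eq (Cardinal.mk_set))) (le_max_right _ _)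
  exact csInf_mem hne

lemma pseudoCharacter_spec [T2Space X] :
    ℵ₀ ≤ pseudoCharacter X ∧ ∀ x : X, ∃ 𝒰 : Set (Set X), #𝒰 ≤ pseudoCharacter X ∧
      (∀ U ∈ 𝒰, IsOpen U) ∧ ⋂₀ 𝒰 = {x} := by
  have hne : {κ : Cardinal.{u} | ℵ₀ ≤ κ ∧ ∀ x : X, ∃ 𝒰 : Set (Set X), #𝒰 ≤ κ ∧
      (∀ U ∈ 𝒰, IsOpen U) ∧ ⋂₀ 𝒰 = {x}}.Nonempty := by
    refine ⟨max ℵ₀ #X, le_max_left _ _, fun x => ?_⟩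
    refine ⟨insert Set.univ ((fun y => ({y}ᶜ : Set X)) '' {x}ᶜ), ?_, ?_, ?_⟩
    · refine le_trans Cardinal.mk_insert_le ?_
      refine Cardinal.add_le_of_le (le_max_left _ _) ?_ ?_
      · exact le_trans (le_trans Cardinal.mk_image_le (Cardinal.mk_set_le _)) (le_max_right _ _)
      · exact le_trans (le_trans Cardinal.one_le_aleph0 le_rfl) (le_max_left _ _)
    · rintro U (rfl | ⟨y, -, rfl⟩)
      · exact isOpen_univ
      · exact isOpen_compl_singleton
    · ext z
      simp only [Set.mem_sInter, Set.mem_insert_iff, Set.mem_singleton_iff]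
      constructor
      · intro h
        by_contra hzx
        have := h ({z}ᶜ) (Or.inr ⟨z, by simpa using hzx, rfl⟩)
        simp at this
      · rintro rfl U (rfl | ⟨y, hy, rfl⟩)
        · trivial
        · simp only [Set.mem_compl_iff, Set.mem_singleton_iff] at hy ⊢
          exact fun h => hy h.symm
  exact csInf_mem hne

lemma kClosure_mem_iff {μ : Cardinal.{u}} {A : Set X} {x : X} :
    x ∈ kClosure μ A ↔ ∃ B : Set X, (B ⊆ A ∧ #B ≤ μ) ∧ x ∈ closure B := by
  simp [kClosure]

lemma kClosure_mono_card {μ₁ μ₂ : Cardinal.{u}} (h : μ₁ ≤ μ₂) (A : Set X) :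
    kClosure μ₁ A ⊆ kClosure μ₂ A := by
  intro x hx
  rw [kClosure_mem_iff] at hx ⊢
  obtain ⟨B, ⟨h1, h2⟩, h3⟩ := hx
  exact ⟨B, ⟨h1, h2.trans h⟩, h3⟩

lemma kClosure_mono_set {μ : Cardinal.{u}} {A A' : Set X} (h : A ⊆ A') :
    kClosure μ A ⊆ kClosure μ A' := by
  intro x hx
  rw [kClosure_mem_iff] at hx ⊢
  obtain ⟨B, ⟨h1, h2⟩, h3⟩ := hx
  exact ⟨B, ⟨h1.trans h, h2⟩, h3⟩

lemma subset_kClosure {μ : Cardinal.{u}} (h1 : 1 ≤ μ) (A : Set X) : A ⊆ kClosure μ A := by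
  intro x hx
  rw [kClosure_mem_iff]
  exact ⟨{x}, ⟨Set.singleton_subset_iff.mpr hx, by simpa using h1⟩, subset_closure rfl⟩

lemma weakTightness_spec :
    ℵ₀ ≤ weakTightness X ∧ ∃ 𝒞 : Set (Set X), IsWeakTightnessWitness X (weakTightness X) 𝒞 := by
  have hne : {κ : Cardinal.{u} | ℵ₀ ≤ κ ∧ ∃ 𝒞 : Set (Set X),
      IsWeakTightnessWitness X κ 𝒞}.Nonempty := by
    refine ⟨max ℵ₀ #X, le_max_left _ _, {Set.univ}, ?_, ?_, ?_⟩
    · simp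
    · have h1 : (1 : Cardinal.{u}) ≤ 2 ^ max ℵ₀ #X := by
        calc (1 : Cardinal.{u}) ≤ ℵ₀ := Cardinal.one_le_aleph0
          _ ≤ max ℵ₀ #X := le_max_left _ _
          _ ≤ 2 ^ max ℵ₀ #X := (Cardinal.cantor _).le
      simpa using h1
    · rintro C rfl
      constructor
      · refine csInf_le' ⟨le_max_left _ _, fun A y hy => ⟨A, Set.Subset.rfl, ?_, hy⟩⟩
        refine le_trans (Cardinal.mk_set_le A) ?_
        rw [Cardinal.mk_univ]
        exact le_max_right _ _
      · apply Set.eq_univ_of_univ_subset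
        refine subset_kClosure ?_ _
        calc (1 : Cardinal.{u}) ≤ ℵ₀ := Cardinal.one_le_aleph0
          _ ≤ max ℵ₀ #X := le_max_left _ _
          _ ≤ 2 ^ max ℵ₀ #X := (Cardinal.cantor _).le
  exact csInf_mem hne

/-- closed pseudocharacter: from T2 + Lindelöf degree + pseudocharacter. -/
lemma psc_exists [T2Space X] {κ : Cardinal.{u}}
    (hκinf : ℵ₀ ≤ κ)
    (hL : ∀ 𝒰 : Set (Set X), (∀ U ∈ 𝒰, IsOpen U) → ⋃₀ 𝒰 = Set.univ →
      ∃ 𝒱 ⊆ 𝒰, #𝒱 ≤ κ ∧ ⋃₀ 𝒱 = Set.univ)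
    (hψ : ∀ x : X, ∃ 𝒰 : Set (Set X), #𝒰 ≤ κ ∧ (∀ U ∈ 𝒰, IsOpen U) ∧ ⋂₀ 𝒰 = {x}) :
    ∀ x : X, ∃ 𝒟 : Set (Set X), #𝒟 ≤ κ ∧ (∀ W ∈ 𝒟, IsOpen W ∧ x ∈ W) ∧
      (⋂ W ∈ 𝒟, closure W) ⊆ {x} := by
  intro x
  obtain ⟨𝒰, h𝒰card, h𝒰open, h𝒰int⟩ := hψ x
  have hxint : x ∈ ⋂₀ 𝒰 := by rw [h𝒰int]; rfl
  have hxU : ∀ U ∈ 𝒰, x ∈ U := fun U hU => hxint U hU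
  have key : ∀ U, U ∈ 𝒰 → ∃ 𝒟U : Set (Set X), #𝒟U ≤ κ ∧ (∀ W ∈ 𝒟U, IsOpen W ∧ x ∈ W) ∧
      (⋂ W ∈ 𝒟U, closure W) ⊆ U := by
    intro U hU
    classical
    set P : Set X → Prop := fun V => IsOpen V ∧ ∃ W, IsOpen W ∧ x ∈ W ∧ V ∩ W = ∅ with hP
    set f : Set X → Set X := fun V => if h : P V then h.2.choose else Set.univ with hf
    have hfspec : ∀ V, P V → IsOpen (f V) ∧ x ∈ f V ∧ V ∩ f V = ∅ := by
      intro V hV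
      have := hV.2.choose_spec
      simp only [hf, dif_pos hV]
      exact ⟨this.1, this.2.1, this.2.2⟩
    have hfopen : ∀ V, IsOpen (f V) ∧ x ∈ f V := by
      intro V
      by_cases h : P V
      · exact ⟨(hfspec V h).1, (hfspec V h).2.1⟩
      · simp only [hf, dif_neg h]; exact ⟨isOpen_univ, trivial⟩
    have hcov : ⋃₀ (insert U {V | P V}) = Set.univ := by
      apply Set.eq_univ_of_forall
      intro z
      by_cases hz : z ∈ U
      · exact ⟨U, Set.mem_insert _ _, hz⟩
      · have hzx : z ≠ x := fun h => hz (h ▸ hxU U hU)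
        obtain ⟨V, W, hVo, hWo, hzV, hxW, hd⟩ := t2_separation hzx
        exact ⟨V, Set.mem_insert_of_mem _ ⟨hVo, W, hWo, hxW,
          Set.disjoint_iff_inter_eq_empty.mp hd⟩, hzV⟩
    obtain ⟨𝒱, h𝒱sub, h𝒱card, h𝒱cov⟩ := hL (insert U {V | P V})
      (by rintro V (rfl | hV); exact h𝒰open _ hU; exact hV.1) hcov
    refine ⟨f '' 𝒱, le_trans Cardinal.mk_image_le h𝒱card, ?_, ?_⟩
    · rintro W ⟨V, -, rfl⟩; exact hfopen V
    · intro z hz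
      have hzuniv : z ∈ ⋃₀ 𝒱 := h𝒱cov ▸ Set.mem_univ z
      obtain ⟨V, hV𝒱, hzV⟩ := hzuniv
      rcases h𝒱sub hV𝒱 with rfl | hPV
      · exact hzV
      · exfalso
        have hzW : z ∈ closure (f V) := by
          have : f V ∈ f '' 𝒱 := ⟨V, hV𝒱, rfl⟩
          exact Set.mem_iInter₂.mp hz (f V) this
        exact auxOpenDisjointClosure hPV.1 (hfspec V hPV).2.2 hzV hzW
  choose! D hDcard hDopen hDsub using key
  refine ⟨⋃ (U : ↥𝒰), D U.1, ?_, ?_, ?_⟩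
  · refine le_trans (Cardinal.mk_iUnion_le _) ?_
    have h1 : #(↥𝒰) ≤ κ := h𝒰card
    have h2 : (⨆ U : ↥𝒰, #(D U.1)) ≤ κ := ciSup_le' fun U => hDcard U.1 U.2
    calc #(↥𝒰) * (⨆ U : ↥𝒰, #(D U.1)) ≤ κ * κ := mul_le_mul' h1 h2
      _ = κ := Cardinal.mul_eq_self hκinf
  · rintro W hW
    obtain ⟨U, hWU⟩ := Set.mem_iUnion.mp hW
    exact hDopen U.1 U.2 W hWU
  · intro z hz
    have : ∀ U ∈ 𝒰, z ∈ U := by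
      intro U hU
      refine hDsub U hU ?_
      refine Set.mem_iInter₂.mpr fun W hW => ?_
      exact Set.mem_iInter₂.mp hz W (Set.mem_iUnion.mpr ⟨⟨U, hU⟩, hW⟩)
    rw [← h𝒰int]
    exact fun U hU => this U hU

lemma exists_enum {α : Type u} {s : Set α} (hne : s.Nonempty) {κ : Cardinal.{u}} (h : #s ≤ κ) :
    ∃ f : κ.out → α, Set.range f = s := by
  have hne' : Nonempty ↥s := hne.to_subtype
  have h' : #(↥s) ≤ #(κ.out) := by rwa [Cardinal.mk_out]
  obtain ⟨g⟩ := (Cardinal.le_def _ _).mp h'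
  refine ⟨Subtype.val ∘ Function.invFun g, ?_⟩
  rw [Set.range_comp, (Function.invFun_surjective g.injective).range_eq, Set.image_univ,
    Subtype.range_val]

lemma closure_card_le {κ : Cardinal.{u}} (hκinf : ℵ₀ ≤ κ)
    (Vfam : X → Set (Set X)) (hVcard : ∀ x, #(Vfam x) ≤ κ)
    (hVopen : ∀ x, ∀ W ∈ Vfam x, IsOpen W ∧ x ∈ W)
    (hVint : ∀ x, (⋂ W ∈ Vfam x, closure W) ⊆ {x})
    {B : Set X} (hB : #B ≤ κ) : #(closure B) ≤ 2 ^ κ := by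
  classical
  set fam : X → Set (Set X) := fun x => insert Set.univ (Vfam x) with hfam
  have hfamcard : ∀ x, #(fam x) ≤ κ := by
    intro x
    refine le_trans Cardinal.mk_insert_le ?_
    exact Cardinal.add_le_of_le hκinf (hVcard x) (le_trans Cardinal.one_le_aleph0 hκinf)
  have hfamne : ∀ x, (fam x).Nonempty := fun x => ⟨Set.univ, Set.mem_insert _ _⟩
  have henum : ∀ x : X, ∃ f : κ.out → Set X, Set.range f = fam x :=
    fun x => exists_enum (hfamne x) (hfamcard x)
  choose e he using henum
  have hmemcl : ∀ (y : X), y ∈ closure B → ∀ i : κ.out, y ∈ closure (e y i ∩ B) := by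
    intro y hy i
    have : e y i ∈ fam y := by rw [← he y]; exact Set.mem_range_self i
    rcases this with h | h
    · rw [h, Set.univ_inter]; exact hy
    · exact auxMemClosureInter (hVopen y _ h).1 (hVopen y _ h).2 hy
  set Φ : ↥(closure B) → (κ.out → Set ↥B) :=
    fun x i => (Subtype.val ⁻¹' (e x.1 i) : Set ↥B) with hΦ
  have hΦinj : Function.Injective Φ := by
    intro x y h
    have htr : ∀ i, e x.1 i ∩ B = e y.1 i ∩ B := by
      intro i
      have := congrFun h i
      simp only [hΦ] at this
      have h1 : Subtype.val '' (Subtype.val ⁻¹' (e x.1 i) : Set ↥B)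
          = Subtype.val '' (Subtype.val ⁻¹' (e y.1 i) : Set ↥B) := by rw [this]
      rwa [Subtype.image_preimage_coe, Subtype.image_preimage_coe, Set.inter_comm,
        Set.inter_comm B] at h1
    have hyx : y.1 ∈ ({x.1} : Set X) := by
      refine hVint x.1 ?_
      refine Set.mem_iInter₂.mpr fun W hW => ?_
      have : W ∈ fam x.1 := Set.mem_insert_of_mem _ hW
      rw [← he x.1] at this
      obtain ⟨i, rfl⟩ := this
      have : y.1 ∈ closure (e y.1 i ∩ B) := hmemcl y.1 y.2 i
      rw [← htr i] at this
      exact closure_mono Set.inter_subset_left this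
    exact Subtype.ext hyx.symm
  have hcard : #(↥(closure B)) ≤ #(κ.out → Set ↥B) := Cardinal.mk_le_of_injective hΦinj
  have h1 : #(κ.out → Set ↥B) = (2 ^ #B) ^ κ := by
    rw [← Cardinal.power_def, Cardinal.mk_set, Cardinal.mk_out]
  have h2 : ((2 : Cardinal.{u}) ^ #B) ^ κ ≤ (2 ^ κ) ^ κ :=
    Cardinal.power_le_power_right (Cardinal.power_le_power_left two_ne_zero hB)
  have h3 : ((2 : Cardinal.{u}) ^ κ) ^ κ = 2 ^ κ := by
    rw [← Cardinal.power_mul, Cardinal.mul_eq_self hκinf]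
  calc #(↥(closure B)) ≤ _ := hcard
    _ = (2 ^ #B) ^ κ := h1
    _ ≤ (2 ^ κ) ^ κ := h2
    _ = 2 ^ κ := h3

lemma aleph0_le_two_power {κ : Cardinal.{u}} (hκinf : ℵ₀ ≤ κ) : ℵ₀ ≤ 2 ^ κ :=
  hκinf.trans (Cardinal.cantor κ).le

lemma bounded_subsets_card_le {κ : Cardinal.{u}} (hκinf : ℵ₀ ≤ κ) {A : Set X}
    (hA : #A ≤ 2 ^ κ) : #{B : Set X | B ⊆ A ∧ #B ≤ κ} ≤ 2 ^ κ := by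
  have h1 : #{B : Set X | B ⊆ A ∧ #B ≤ κ} ≤ max #A ℵ₀ ^ κ :=
    Cardinal.mk_bounded_subset_le A κ
  refine h1.trans ?_
  have h2 : max #A ℵ₀ ≤ 2 ^ κ := max_le hA (aleph0_le_two_power hκinf)
  calc max #A ℵ₀ ^ κ ≤ (2 ^ κ) ^ κ := Cardinal.power_le_power_right h2
    _ = 2 ^ κ := by rw [← Cardinal.power_mul, Cardinal.mul_eq_self hκinf]

lemma kClosure_card_le {κ : Cardinal.{u}} (hκinf : ℵ₀ ≤ κ)
    (hcl : ∀ B : Set X, #B ≤ κ → #(closure B) ≤ 2 ^ κ)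
    {A : Set X} (hA : #A ≤ 2 ^ κ) : #(kClosure κ A) ≤ 2 ^ κ := by
  have hb := Cardinal.mk_biUnion_le (fun B : Set X => closure B) {B : Set X | B ⊆ A ∧ #B ≤ κ}
  rw [kClosure]
  refine le_trans hb ?_
  have h1 : #{B : Set X | B ⊆ A ∧ #B ≤ κ} ≤ 2 ^ κ := bounded_subsets_card_le hκinf hA
  have h2 : (⨆ B : ↥{B : Set X | B ⊆ A ∧ #B ≤ κ}, #(closure B.1)) ≤ 2 ^ κ :=
    ciSup_le' fun B => hcl B.1 B.2.2
  calc _ ≤ (2 ^ κ) * (2 ^ κ) := mul_le_mul' h1 h2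
    _ = 2 ^ κ := Cardinal.mul_eq_self (aleph0_le_two_power hκinf)

/-- Transfinite iteration of an operator `g` along a well-ordered type. -/
def chainFam {W : Type u} [LT W] [IsWellFounded W (· < ·)] {Y : Type u}
    (g : Set Y → Set Y) : W → Set Y :=
  (IsWellFounded.wf (α := W) (r := (· < ·))).fix
    fun w ih => ⋃ v : {v : W // v < w}, g (ih v.1 v.2)

lemma chainFam_eq {W : Type u} [LT W] [IsWellFounded W (· < ·)] {Y : Type u}
    (g : Set Y → Set Y) (w : W) :
    chainFam g w = ⋃ v : {v : W // v < w}, g (chainFam g v.1) := by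
  rw [chainFam, WellFounded.fix_eq]

lemma chainFam_subset {W : Type u} [LT W] [IsWellFounded W (· < ·)] {Y : Type u}
    (g : Set Y → Set Y) {v w : W} (h : v < w) : g (chainFam g v) ⊆ chainFam g w := by
  rw [chainFam_eq g w]
  exact Set.subset_iUnion (fun u : {u : W // u < w} => g (chainFam g u.1)) ⟨v, h⟩

lemma chainFam_card {W : Type u} [LT W] [IsWellFounded W (· < ·)] {Y : Type u}
    {κ : Cardinal.{u}} (hκinf : ℵ₀ ≤ κ) (hW : #W ≤ 2 ^ κ)
    (g : Set Y → Set Y) (hg : ∀ A : Set Y, #A ≤ 2 ^ κ → #(g A) ≤ 2 ^ κ) (w : W) :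
    #(chainFam g w) ≤ 2 ^ κ := by
  refine (IsWellFounded.wf (α := W) (r := (· < ·))).induction (C := fun w => #(chainFam g w) ≤ 2 ^ κ) w ?_
  intro w ih
  · rw [chainFam_eq]
    refine le_trans (Cardinal.mk_iUnion_le _) ?_
    have h1 : #{v : W // v < w} ≤ 2 ^ κ := le_trans (Cardinal.mk_subtype_le _) hW
    have h2 : (⨆ v : {v : W // v < w}, #(g (chainFam g v.1))) ≤ 2 ^ κ :=
      ciSup_le' fun v => hg _ (ih v.1 v.2)
    calc _ ≤ (2 ^ κ) * (2 ^ κ) := mul_le_mul' h1 h2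
      _ = 2 ^ κ := Cardinal.mul_eq_self (aleph0_le_two_power hκinf)

lemma chainFam_capture {κ : Cardinal.{u}} (hκinf : ℵ₀ ≤ κ) {Y : Type u}
    (g : Set Y → Set Y) {T : Set Y}
    (hT : T ⊆ ⋃ w : ((Order.succ κ).ord).ToType, g (chainFam g w))
    (hTcard : #T ≤ κ) :
    ∃ w : ((Order.succ κ).ord).ToType, T ⊆ chainFam g w := by
  classical
  set W := ((Order.succ κ).ord).ToType with hW
  haveI : IsWellOrder W (· < ·) := isWellOrder_lt
  have hsel : ∀ t : ↥T, ∃ w : W, t.1 ∈ g (chainFam g w) := fun t => Set.mem_iUnion.mp (hT t.2)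
  choose f hf using hsel
  have hScard : #(Set.range f) < Ordinal.cof (Ordinal.type ((· < ·) : W → W → Prop)) := by
    have h1 : #(Set.range f) ≤ κ := le_trans Cardinal.mk_range_le hTcard
    have h2 : Ordinal.cof (Ordinal.type ((· < ·) : W → W → Prop)) = Order.succ κ := by
      rw [Ordinal.type_toType, Cardinal.IsRegular.cof_eq (Cardinal.isRegular_succ hκinf)]
    rw [h2]
    exact lt_of_le_of_lt h1 (Order.lt_succ κ)
  obtain ⟨w, hw⟩ : ∃ w : W, ∀ a ∈ Set.range f, a < w := by
    by_contra hcon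
    push_neg at hcon
    have hcof : IsCofinal (Set.range f) := hcon
    have h := hScard
    rw [Ordinal.cof_type] at h
    exact absurd h (not_lt.mpr (Order.cof_le hcof))
  refine ⟨w, fun t ht => ?_⟩
  have hlt : f ⟨t, ht⟩ < w := hw _ (Set.mem_range_self _)
  exact chainFam_subset g hlt (hf ⟨t, ht⟩)

lemma tight_trace {C : Set X} {S : Set X} {z : X} (hz : z ∈ C)
    (hcl : z ∈ closure (S ∩ C)) :
    ∃ B : Set X, B ⊆ S ∩ C ∧ #B ≤ tightness ↥C ∧ z ∈ closure B := by
  set A' : Set ↥C := Subtype.val ⁻¹' (S ∩ C) with hA'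
  have himg : Subtype.val '' A' = S ∩ C := by
    ext w
    constructor
    · rintro ⟨w', hw', rfl⟩; exact hw'
    · intro hw; exact ⟨⟨w, hw.2⟩, hw, rfl⟩
  have hz' : (⟨z, hz⟩ : ↥C) ∈ closure A' := by
    rw [auxClosureSubtype hz A', himg]; exact hcl
  obtain ⟨B', hB'sub, hB'card, hB'cl⟩ := (tightness_spec ↥C).2 A' ⟨z, hz⟩ hz'
  refine ⟨Subtype.val '' B', ?_, ?_, ?_⟩
  · rw [← himg]; exact Set.image_mono hB'sub
  · exact le_trans Cardinal.mk_image_le hB'card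
  · rw [← auxClosureSubtype hz B']; exact hB'cl

end AuxBellaCarlson

/-- For a Hausdorff space `X`, `|X| ≤ 2^{L(X)·wt(X)·ψ(X)}`. -/
theorem card_le_two_pow_lindelof_weakTightness_psi
    (X : Type u) [TopologicalSpace X] [T2Space X] :
    #X ≤ 2 ^ (lindelofDegree X * weakTightness X * pseudoCharacter X) := by
  classical
  rcases isEmpty_or_nonempty X with hE | hNE
  · exact le_trans (le_of_eq (Cardinal.mk_eq_zero X)) (zero_le)
  set κ := lindelofDegree X * weakTightness X * pseudoCharacter X with hκdef
  obtain ⟨hLinf, hLprop⟩ := lindelofDegree_spec (X := X)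
  obtain ⟨hwinf, 𝒞, h𝒞cov, h𝒞card0, h𝒞props0⟩ := weakTightness_spec (X := X)
  obtain ⟨hψinf, hψprop⟩ := pseudoCharacter_spec (X := X)
  have h1L : (1 : Cardinal.{u}) ≤ lindelofDegree X := Cardinal.one_le_aleph0.trans hLinf
  have h1w : (1 : Cardinal.{u}) ≤ weakTightness X := Cardinal.one_le_aleph0.trans hwinf
  have h1ψ : (1 : Cardinal.{u}) ≤ pseudoCharacter X := Cardinal.one_le_aleph0.trans hψinf
  have hLκ : lindelofDegree X ≤ κ := by
    calc lindelofDegree X = lindelofDegree X * 1 * 1 := by rw [mul_one, mul_one]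
      _ ≤ κ := by rw [hκdef]; gcongr
  have hwκ : weakTightness X ≤ κ := by
    calc weakTightness X = 1 * weakTightness X * 1 := by rw [one_mul, mul_one]
      _ ≤ κ := by rw [hκdef]; gcongr
  have hψκ : pseudoCharacter X ≤ κ := by
    calc pseudoCharacter X = 1 * 1 * pseudoCharacter X := by rw [one_mul, one_mul]
      _ ≤ κ := by rw [hκdef]; gcongr
  have hκinf : ℵ₀ ≤ κ := hLinf.trans hLκ
  have hL : ∀ 𝒰 : Set (Set X), (∀ U ∈ 𝒰, IsOpen U) → ⋃₀ 𝒰 = Set.univ →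
      ∃ 𝒱 ⊆ 𝒰, #𝒱 ≤ κ ∧ ⋃₀ 𝒱 = Set.univ := by
    intro 𝒰 h1 h2
    obtain ⟨𝒱, ha, hb, hc⟩ := hLprop 𝒰 h1 h2
    exact ⟨𝒱, ha, hb.trans hLκ, hc⟩
  have hψ : ∀ x : X, ∃ 𝒰 : Set (Set X), #𝒰 ≤ κ ∧ (∀ U ∈ 𝒰, IsOpen U) ∧ ⋂₀ 𝒰 = {x} := by
    intro x
    obtain ⟨𝒰, ha, hb, hc⟩ := hψprop x
    exact ⟨𝒰, ha.trans hψκ, hb, hc⟩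
  have h2κ : (2 : Cardinal.{u}) ^ weakTightness X ≤ 2 ^ κ :=
    Cardinal.power_le_power_left two_ne_zero hwκ
  have h𝒞card : #𝒞 ≤ 2 ^ κ := h𝒞card0.trans h2κ
  have h𝒞t : ∀ C ∈ 𝒞, tightness ↥C ≤ κ := fun C hC => (h𝒞props0 C hC).1.trans hwκ
  have h𝒞k : ∀ C ∈ 𝒞, kClosure (2 ^ κ) C = Set.univ := by
    intro C hC
    apply Set.eq_univ_of_univ_subset
    rw [← (h𝒞props0 C hC).2]
    exact kClosure_mono_card h2κ C
  -- closed pseudobases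
  obtain ⟨Vfam, hVfam⟩ : ∃ Vfam : X → Set (Set X), ∀ x, #(Vfam x) ≤ κ ∧
      (∀ W ∈ Vfam x, IsOpen W ∧ x ∈ W) ∧ (⋂ W ∈ Vfam x, closure W) ⊆ {x} := by
    have := psc_exists hκinf hL hψ
    choose Vfam h1 h2 h3 using this
    exact ⟨Vfam, fun x => ⟨h1 x, h2 x, h3 x⟩⟩
  have hclcard : ∀ B : Set X, #B ≤ κ → #(closure B) ≤ 2 ^ κ :=
    fun B hB => closure_card_le hκinf Vfam (fun x => (hVfam x).1)
      (fun x => (hVfam x).2.1) (fun x => (hVfam x).2.2) hB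
  -- selection of small dense-against sets from the weak tightness witness
  have hBsel0 : ∀ (x : X) (C : Set X), C ∈ 𝒞 →
      ∃ B : Set X, (B ⊆ C ∧ #B ≤ 2 ^ κ) ∧ x ∈ closure B := by
    intro x C hC
    have : x ∈ kClosure (2 ^ κ) C := by rw [h𝒞k C hC]; trivial
    exact kClosure_mem_iff.mp this
  choose! Bsel hBsel1 hBsel2 using hBsel0
  -- the operator g
  set pool : Set X → Set (Set X) := fun A => ⋃ y ∈ kClosure κ A, Vfam y with hpool
  set Dif : Set (Set X) → Set X → Set X := fun 𝒱 C => C \ ⋃ V ∈ 𝒱, closure V with hDif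
  set pick : Set (Set X) × Set X → X :=
    fun p => if h : (Dif p.1 p.2).Nonempty then h.choose else Classical.arbitrary X with hpick
  have hpickspec : ∀ p : Set (Set X) × Set X, (Dif p.1 p.2).Nonempty → pick p ∈ Dif p.1 p.2 := by
    intro p h
    simp only [hpick, dif_pos h]
    exact h.choose_spec
  set g : Set X → Set X := fun A => (A ∪ ⋃ x ∈ A, ⋃ C ∈ 𝒞, Bsel x C) ∪
    (pick '' {p : Set (Set X) × Set X | p.1 ⊆ pool A ∧ #p.1 ≤ κ ∧ p.2 ∈ 𝒞 ∧
      (Dif p.1 p.2).Nonempty}) with hgdef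
  have hgsub : ∀ A : Set X, A ⊆ g A :=
    fun A => Set.Subset.trans Set.subset_union_left Set.subset_union_left
  have hpoolcard : ∀ A : Set X, #A ≤ 2 ^ κ → #(pool A) ≤ 2 ^ κ := by
    intro A hA
    refine le_trans (Cardinal.mk_biUnion_le _ _) ?_
    have h1 : #(kClosure κ A) ≤ 2 ^ κ := kClosure_card_le hκinf hclcard hA
    have h2 : (⨆ y : ↥(kClosure κ A), #(Vfam y.1)) ≤ 2 ^ κ :=
      ciSup_le' fun y => ((hVfam y.1).1).trans ((Cardinal.cantor κ).le.trans' le_rfl |>.trans' le_rfl)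
    calc _ ≤ (2 ^ κ) * (2 ^ κ) := mul_le_mul' h1 h2
      _ = 2 ^ κ := Cardinal.mul_eq_self (aleph0_le_two_power hκinf)
  have hgcard : ∀ A : Set X, #A ≤ 2 ^ κ → #(g A) ≤ 2 ^ κ := by
    intro A hA
    have hpart1 : #(⋃ x ∈ A, ⋃ C ∈ 𝒞, Bsel x C) ≤ 2 ^ κ := by
      refine le_trans (Cardinal.mk_biUnion_le _ _) ?_
      have hsup : (⨆ x : ↥A, #(⋃ C ∈ 𝒞, Bsel x.1 C)) ≤ 2 ^ κ := by
        refine ciSup_le' fun x => ?_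
        refine le_trans (Cardinal.mk_biUnion_le _ _) ?_
        have : (⨆ C : ↥𝒞, #(Bsel x.1 C.1)) ≤ 2 ^ κ :=
          ciSup_le' fun C => (hBsel1 x.1 C.1 C.2).2
        calc _ ≤ (2 ^ κ) * (2 ^ κ) := mul_le_mul' h𝒞card this
          _ = 2 ^ κ := Cardinal.mul_eq_self (aleph0_le_two_power hκinf)
      calc _ ≤ (2 ^ κ) * (2 ^ κ) := mul_le_mul' hA hsup
        _ = 2 ^ κ := Cardinal.mul_eq_self (aleph0_le_two_power hκinf)
    have hpart2 : #(pick '' {p : Set (Set X) × Set X | p.1 ⊆ pool A ∧ #p.1 ≤ κ ∧ p.2 ∈ 𝒞 ∧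
        (Dif p.1 p.2).Nonempty}) ≤ 2 ^ κ := by
      refine le_trans Cardinal.mk_image_le ?_
      have hsub : {p : Set (Set X) × Set X | p.1 ⊆ pool A ∧ #p.1 ≤ κ ∧ p.2 ∈ 𝒞 ∧
          (Dif p.1 p.2).Nonempty} ⊆ {𝒱 : Set (Set X) | 𝒱 ⊆ pool A ∧ #𝒱 ≤ κ} ×ˢ 𝒞 := by
        rintro ⟨𝒱, C⟩ ⟨h1, h2, h3, -⟩
        exact ⟨⟨h1, h2⟩, h3⟩
      refine le_trans (Cardinal.mk_le_mk_of_subset hsub) ?_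
      rw [Cardinal.mk_congr (Equiv.Set.prod _ _)]
      have hS : #{𝒱 : Set (Set X) | 𝒱 ⊆ pool A ∧ #𝒱 ≤ κ} ≤ 2 ^ κ :=
        by letI : TopologicalSpace (Set X) := ⊥; exact bounded_subsets_card_le hκinf (hpoolcard A hA)
      calc #(↥{𝒱 : Set (Set X) | 𝒱 ⊆ pool A ∧ #𝒱 ≤ κ} × ↥𝒞)
          = #{𝒱 : Set (Set X) | 𝒱 ⊆ pool A ∧ #𝒱 ≤ κ} * #𝒞 := by
            rw [Cardinal.mk_prod, Cardinal.lift_id, Cardinal.lift_id]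
        _ ≤ (2 ^ κ) * (2 ^ κ) := mul_le_mul' hS h𝒞card
        _ = 2 ^ κ := Cardinal.mul_eq_self (aleph0_le_two_power hκinf)
    refine le_trans (Cardinal.mk_union_le _ _) ?_
    refine Cardinal.add_le_of_le (aleph0_le_two_power hκinf) ?_ hpart2
    refine le_trans (Cardinal.mk_union_le _ _) ?_
    exact Cardinal.add_le_of_le (aleph0_le_two_power hκinf) hA hpart1
  -- the transfinite chain
  set W := ((Order.succ κ).ord).ToType with hWdef
  haveI : IsWellOrder W (· < ·) := isWellOrder_lt
  have hWcard : #W ≤ 2 ^ κ := by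
    rw [hWdef, Cardinal.mk_ord_toType]
    exact Order.succ_le_of_lt (Cardinal.cantor κ)
  set H := ⋃ w : W, g (chainFam g w) with hHdef
  have hgH : ∀ w : W, g (chainFam g w) ⊆ H := by
    intro w
    rw [hHdef]
    exact Set.subset_iUnion (fun w : W => g (chainFam g w)) w
  have hstage : ∀ w : W, chainFam g w ⊆ H := by
    intro w
    rw [chainFam_eq g w]
    exact Set.iUnion_subset fun v => hgH v.1
  have hHcard : #H ≤ 2 ^ κ := by
    rw [hHdef]
    refine le_trans (Cardinal.mk_iUnion_le _) ?_
    have h2 : (⨆ w : W, #(g (chainFam g w))) ≤ 2 ^ κ :=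
      ciSup_le' fun w => hgcard _ (chainFam_card hκinf hWcard g hgcard w)
    calc _ ≤ (2 ^ κ) * (2 ^ κ) := mul_le_mul' hWcard h2
      _ = 2 ^ κ := Cardinal.mul_eq_self (aleph0_le_two_power hκinf)
  have hcap : ∀ T : Set X, T ⊆ H → #T ≤ κ → ∃ w : W, T ⊆ chainFam g w :=
    fun T h1 h2 => chainFam_capture hκinf g h1 h2
  -- property P1 : every point of H is in the closure of every trace H ∩ C
  have hP1 : ∀ x ∈ H, ∀ C ∈ 𝒞, x ∈ closure (H ∩ C) := by
    intro x hx C hC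
    obtain ⟨w, hw⟩ := hcap {x} (Set.singleton_subset_iff.mpr hx)
      (by rw [Cardinal.mk_singleton]; exact Cardinal.one_le_aleph0.trans hκinf)
    have hxw : x ∈ chainFam g w := hw rfl
    have hBin : Bsel x C ⊆ g (chainFam g w) := by
      intro b hb
      refine Set.mem_union_left _ (Set.mem_union_right _ ?_)
      exact Set.mem_biUnion hxw (Set.mem_biUnion hC hb)
    have hsubHC : Bsel x C ⊆ H ∩ C :=
      fun b hb => ⟨hgH w (hBin hb), (hBsel1 x C hC).1 hb⟩
    exact closure_mono hsubHC (hBsel2 x C hC)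
  -- property P2 : stage-based hitting of complements
  have hP2 : ∀ (𝒱 : Set (Set X)) (w : W), 𝒱 ⊆ pool (chainFam g w) → #𝒱 ≤ κ →
      ∀ C ∈ 𝒞, (Dif 𝒱 C).Nonempty → ∃ z ∈ H, z ∈ Dif 𝒱 C := by
    intro 𝒱 w hsub hcard C hC hne
    refine ⟨pick (𝒱, C), ?_, hpickspec (𝒱, C) hne⟩
    apply hgH w
    refine Set.mem_union_right _ ?_
    exact ⟨(𝒱, C), ⟨hsub, hcard, hC, hne⟩, rfl⟩
  -- main claim
  have hmain : (Set.univ : Set X) ⊆ kClosure κ H := by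
    intro q _
    by_contra hq
    have hWsel0 : ∀ y, y ∈ kClosure κ H → ∃ V ∈ Vfam y, q ∉ closure V := by
      intro y hy
      by_contra hcon
      push_neg at hcon
      have h1 : q ∈ ⋂ W' ∈ Vfam y, closure W' := Set.mem_iInter₂.mpr hcon
      have h2 : q ∈ ({y} : Set X) := (hVfam y).2.2 h1
      rw [Set.mem_singleton_iff] at h2
      exact hq (h2 ▸ hy)
    set Wsel : X → Set X := fun y => if h : ∃ V ∈ Vfam y, q ∉ closure V
      then h.choose else ∅ with hWseldef
    have hWspec : ∀ y, (∃ V ∈ Vfam y, q ∉ closure V) →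
        Wsel y ∈ Vfam y ∧ q ∉ closure (Wsel y) := by
      intro y h
      simp only [hWseldef, dif_pos h]
      exact ⟨h.choose_spec.1, h.choose_spec.2⟩
    set 𝒰 : Set (Set X) := (Wsel '' (kClosure κ H)) ∪
      ((fun C => (closure (H ∩ C))ᶜ) '' 𝒞) with h𝒰def
    have h𝒰open : ∀ U ∈ 𝒰, IsOpen U := by
      rintro U (⟨y, hy, rfl⟩ | ⟨C, hC, rfl⟩)
      · exact ((hVfam y).2.1 _ (hWspec y (hWsel0 y hy)).1).1
      · exact isClosed_closure.isOpen_compl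
    have h𝒰cov : ⋃₀ 𝒰 = Set.univ := by
      apply Set.eq_univ_of_forall
      intro z
      by_cases hzk : z ∈ kClosure κ H
      · exact ⟨Wsel z, Or.inl ⟨z, hzk, rfl⟩, ((hVfam z).2.1 _ (hWspec z (hWsel0 z hzk)).1).2⟩
      · obtain ⟨C, hC, hzC⟩ : ∃ C ∈ 𝒞, z ∈ C := by
          have : z ∈ ⋃₀ 𝒞 := h𝒞cov ▸ Set.mem_univ z
          exact this
        refine ⟨(closure (H ∩ C))ᶜ, Or.inr ⟨C, hC, rfl⟩, ?_⟩
        intro hzcl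
        obtain ⟨B, hBsub, hBcard, hBcl⟩ := tight_trace hzC hzcl
        exact hzk (kClosure_mem_iff.mpr ⟨B, ⟨hBsub.trans Set.inter_subset_left,
          hBcard.trans (h𝒞t C hC)⟩, hBcl⟩)
    obtain ⟨𝒱', h𝒱'sub, h𝒱'card, h𝒱'cov⟩ := hL 𝒰 h𝒰open h𝒰cov
    set 𝒱 := {V | V ∈ 𝒱' ∧ ∃ y, y ∈ kClosure κ H ∧ V = Wsel y} with h𝒱def
    have h𝒱sub' : 𝒱 ⊆ 𝒱' := fun V hV => hV.1
    have h𝒱card : #𝒱 ≤ κ := le_trans (Cardinal.mk_le_mk_of_subset h𝒱sub') h𝒱'card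
    have h𝒱q : ∀ V ∈ 𝒱, q ∉ closure V := by
      rintro V ⟨-, y, hy, rfl⟩
      exact (hWspec y (hWsel0 y hy)).2
    choose ysel hysel1 hysel2 using (fun V : ↥𝒱 => V.2.2)
    have hBv0 : ∀ V : ↥𝒱, ∃ B : Set X, (B ⊆ H ∧ #B ≤ κ) ∧ (ysel V) ∈ closure B :=
      fun V => kClosure_mem_iff.mp (hysel1 V)
    choose Bv hBv1 hBv2 using hBv0
    have hTH : (⋃ V : ↥𝒱, Bv V) ⊆ H := Set.iUnion_subset fun V => (hBv1 V).1
    have hTcard : #(⋃ V : ↥𝒱, Bv V) ≤ κ := by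
      refine le_trans (Cardinal.mk_iUnion_le _) ?_
      have h2 : (⨆ V : ↥𝒱, #(Bv V)) ≤ κ := ciSup_le' fun V => (hBv1 V).2
      calc _ ≤ κ * κ := mul_le_mul' h𝒱card h2
        _ = κ := Cardinal.mul_eq_self hκinf
    obtain ⟨w, hw⟩ := hcap _ hTH hTcard
    have h𝒱pool : 𝒱 ⊆ pool (chainFam g w) := by
      intro V hV
      have hy' : ysel ⟨V, hV⟩ ∈ kClosure κ (chainFam g w) :=
        kClosure_mem_iff.mpr ⟨Bv ⟨V, hV⟩,
          ⟨(Set.subset_iUnion (fun V : ↥𝒱 => Bv V) ⟨V, hV⟩).trans hw, (hBv1 ⟨V, hV⟩).2⟩,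
          hBv2 ⟨V, hV⟩⟩
      have hmem : V ∈ Vfam (ysel ⟨V, hV⟩) := by
        have h3 := (hWspec _ (hWsel0 _ (hysel1 ⟨V, hV⟩))).1
        have h2 : V = Wsel (ysel ⟨V, hV⟩) := hysel2 ⟨V, hV⟩
        exact Set.mem_of_eq_of_mem h2 h3
      exact Set.mem_biUnion hy' hmem
    obtain ⟨C₀, hC₀, hqC₀⟩ : ∃ C ∈ 𝒞, q ∈ C := by
      have : q ∈ ⋃₀ 𝒞 := h𝒞cov ▸ Set.mem_univ q
      exact this
    have hne : (Dif 𝒱 C₀).Nonempty := by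
      refine ⟨q, hqC₀, ?_⟩
      intro hqin
      obtain ⟨V, hV, hq'⟩ := Set.mem_iUnion₂.mp hqin
      exact h𝒱q V hV hq'
    obtain ⟨z, hzH, hzD⟩ := hP2 𝒱 w h𝒱pool h𝒱card C₀ hC₀ hne
    obtain ⟨hzC₀, hznot⟩ := hzD
    obtain ⟨V₀, hV₀, hzV₀⟩ : ∃ V ∈ 𝒱', z ∈ V := by
      have : z ∈ ⋃₀ 𝒱' := h𝒱'cov ▸ Set.mem_univ z
      exact this
    rcases h𝒱'sub hV₀ with ⟨y, hy, rfl⟩ | ⟨C, hC, rfl⟩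
    · have hmemV : Wsel y ∈ 𝒱 := ⟨hV₀, y, hy, rfl⟩
      exact hznot (Set.mem_iUnion₂.mpr ⟨Wsel y, hmemV, subset_closure hzV₀⟩)
    · exact hzV₀ (hP1 z hzH C hC)
  calc #X = #(Set.univ : Set X) := Cardinal.mk_univ.symm
    _ ≤ #(kClosure κ H) := Cardinal.mk_le_mk_of_subset hmain
    _ ≤ 2 ^ κ := kClosure_card_le hκinf hclcard hHcard

end
end
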